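/- Let m = 1 be the intervened agent. Let a = (π_1 p_1, …, π_K p_K)ᵀ, p = (p_1,…,p_K)ᵀ, A = diag(a), P̄ = diag(1-p_1,…,1-p_K), s_k = p_k ∑_{ℓ≠k} π_ℓ(1-p_ℓ), σ = ∑_k π_k(1-p_k). Let R be the (K+1)×(K+1) matrix with upper-left block P̄A + P̄ + p aᵀ, upper-right column (s_1,…,s_K)ᵀ, lower-left row aᵀ, lower-right entry σ, and U the (K+1)×K matrix with first K rows P̄A + P̄ + p aᵀ and last row aᵀ. Let R̃ be R with its first row and first column removed, Ũ be U with its first row removed, and, for a fixed θ ≠ θ°, d̃ = (c, d_2(θ), …, d_K(θ))ᵀ where c = log( μ_1(θ°)/μ_1(θ) ). Then I − R̃ is invertible, the recursion Λ̃_i = R̃ Λ̃_{i-1} + Ũ d̃ converges for every initial vector to (I − R̃)^{-1} Ũ d̃, and the last coordinate of this limit (the fusion center's expected log-belief ratio) equals λ̃_∞(θ) = (1/(π_1 p_1)) ∑_{k≠1} π_k d_k(θ) / ( 1 − π_k (1 − p_k) ) + c. -/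

import Mathlib

open Finset Filter Matrix

lemma aux_mulVec_norm_le {N : ℕ} (M : Matrix (Fin (N+1)) (Fin (N+1)) ℝ) (C : ℝ)
    (h : ∀ i, ∑ j, |M i j| ≤ C) (v : Fin (N+1) → ℝ) :
    ‖M.mulVec v‖ ≤ C * ‖v‖ := by
  have hC0 : 0 ≤ C := le_trans (Finset.sum_nonneg fun j _ => abs_nonneg _) (h 0)
  rw [pi_norm_le_iff_of_nonneg (mul_nonneg hC0 (norm_nonneg _))]
  intro i
  calc ‖M.mulVec v i‖ = |∑ j, M i j * v j| := by simp [Matrix.mulVec, dotProduct, Real.norm_eq_abs]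
    _ ≤ ∑ j, |M i j * v j| := Finset.abs_sum_le_sum_abs _ _
    _ ≤ ∑ j, |M i j| * ‖v‖ := by
        refine Finset.sum_le_sum fun j _ => ?_
        rw [abs_mul]
        exact mul_le_mul_of_nonneg_left (norm_le_pi_norm v j) (abs_nonneg _)
    _ = (∑ j, |M i j|) * ‖v‖ := by rw [Finset.sum_mul]
    _ ≤ C * ‖v‖ := mul_le_mul_of_nonneg_right (h i) (norm_nonneg _)

lemma aux_det_ne {N : ℕ} (M : Matrix (Fin (N+1)) (Fin (N+1)) ℝ) (C : ℝ)
    (hC1 : C < 1) (hM : ∀ v, ‖M.mulVec v‖ ≤ C * ‖v‖) :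
    (1 - M).det ≠ 0 := by
  intro hdet
  obtain ⟨v, hv0, hv⟩ := (Matrix.exists_mulVec_eq_zero_iff).mpr hdet
  have hvM : v = M.mulVec v := by
    have := hv
    rw [Matrix.sub_mulVec, Matrix.one_mulVec, sub_eq_zero] at this
    exact this
  have h1 : ‖v‖ ≤ C * ‖v‖ := by nth_rewrite 1 [hvM]; exact hM v
  have h2 : 0 < ‖v‖ := norm_pos_iff.mpr hv0
  nlinarith

lemma aux_conv {N : ℕ} (M : Matrix (Fin (N+1)) (Fin (N+1)) ℝ) (C : ℝ)
    (hC0 : 0 ≤ C) (hC1 : C < 1) (hM : ∀ v, ‖M.mulVec v‖ ≤ C * ‖v‖)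
    (b x : Fin (N+1) → ℝ) (hx : x = M.mulVec x + b)
    (Λ : ℕ → Fin (N+1) → ℝ) (hΛ : ∀ i, Λ (i+1) = M.mulVec (Λ i) + b) :
    Tendsto Λ atTop (nhds x) := by
  have key : ∀ i, ‖Λ i - x‖ ≤ C ^ i * ‖Λ 0 - x‖ := by
    intro i; induction i with
    | zero => simp
    | succ i ih =>
      have h : Λ (i+1) - x = M.mulVec (Λ i - x) := by
        rw [hΛ i, Matrix.mulVec_sub]
        conv_lhs => rw [hx]
        abel
      rw [h]
      calc ‖M.mulVec (Λ i - x)‖ ≤ C * ‖Λ i - x‖ := hM _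
        _ ≤ C * (C ^ i * ‖Λ 0 - x‖) := mul_le_mul_of_nonneg_left ih hC0
        _ = C ^ (i+1) * ‖Λ 0 - x‖ := by ring
  rw [← tendsto_sub_nhds_zero_iff]
  apply squeeze_zero_norm key
  have := (tendsto_pow_atTop_nhds_zero_of_lt_one hC0 hC1).mul_const ‖Λ 0 - x‖
  simpa using this

lemma aux_fixed {N : ℕ} (M : Matrix (Fin (N+1)) (Fin (N+1)) ℝ)
    (hdet : (1 - M).det ≠ 0) (b x : Fin (N+1) → ℝ)
    (hx : (1 - M).mulVec x = b) : (1 - M)⁻¹.mulVec b = x := by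
  rw [← hx, Matrix.mulVec_mulVec,
    Matrix.nonsing_inv_mul _ (isUnit_iff_ne_zero.mpr hdet), Matrix.one_mulVec]

set_option maxHeartbeats 1000000 in
theorem symmetric_intervention_matrix_recursion
    {n : ℕ} (hn : 1 ≤ n)
    {Θ : Type*} [Fintype Θ] (θ₀ θw : Θ) (hθw : θw ≠ θ₀)
    (π p : Fin (n + 1) → ℝ)
    (hπ : ∀ k, π k ∈ Set.Ioo (0 : ℝ) 1) (hπsum : ∑ k, π k = 1)
    (hp : ∀ k, p k ∈ Set.Ioc (0 : ℝ) 1)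
    (d : Fin (n + 1) → ℝ) (hd : ∀ k, 0 ≤ d k)
    (μ₁ : Θ → ℝ) (hμ₁ : ∀ θ, 0 < μ₁ θ) (hμ₁sum : ∑ θ, μ₁ θ = 1)
    (c : ℝ) (hc : c = Real.log (μ₁ θ₀ / μ₁ θw))
    (R : Matrix (Fin (n + 2)) (Fin (n + 2)) ℝ)
    (U : Matrix (Fin (n + 2)) (Fin (n + 1)) ℝ)
    (hR11 : ∀ j k : Fin (n + 1), R j.castSucc k.castSucc =
      (if j = k then (1 - p j) * (π j * p j) + (1 - p j) else 0) + p j * (π k * p k))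
    (hR12 : ∀ j : Fin (n + 1), R j.castSucc (Fin.last (n + 1)) =
      p j * ∑ l ∈ univ.erase j, π l * (1 - p l))
    (hR21 : ∀ k : Fin (n + 1), R (Fin.last (n + 1)) k.castSucc = π k * p k)
    (hR22 : R (Fin.last (n + 1)) (Fin.last (n + 1)) = ∑ k, π k * (1 - p k))
    (hU1 : ∀ j k : Fin (n + 1), U j.castSucc k =
      (if j = k then (1 - p j) * (π j * p j) + (1 - p j) else 0) + p j * (π k * p k))
    (hU2 : ∀ k : Fin (n + 1), U (Fin.last (n + 1)) k = π k * p k)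
    (Rt : Matrix (Fin (n + 1)) (Fin (n + 1)) ℝ)
    (hRt : Rt = R.submatrix Fin.succ Fin.succ)
    (Ut : Matrix (Fin (n + 1)) (Fin (n + 1)) ℝ)
    (hUt : Ut = U.submatrix Fin.succ id)
    (dt : Fin (n + 1) → ℝ)
    (hdt : ∀ j : Fin (n + 1), dt j = if j = 0 then c else d j) :
    IsUnit (1 - Rt) ∧
    (∀ Λ : ℕ → Fin (n + 1) → ℝ,
      (∀ i : ℕ, Λ (i + 1) = Rt.mulVec (Λ i) + Ut.mulVec dt) →
      Tendsto Λ atTop (nhds ((1 - Rt)⁻¹.mulVec (Ut.mulVec dt)))) ∧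
    ((1 - Rt)⁻¹.mulVec (Ut.mulVec dt)) (Fin.last n) =
      (1 / (π 0 * p 0)) *
        (∑ k ∈ univ.erase 0, π k * d k / (1 - π k * (1 - p k))) + c := by
  have hπ0 : ∀ k, 0 < π k := fun k => (hπ k).1
  have hπ1 : ∀ k, π k < 1 := fun k => (hπ k).2
  have hp0 : ∀ k, 0 < p k := fun k => (hp k).1
  have hp1 : ∀ k, p k ≤ 1 := fun k => (hp k).2
  have hq : ∀ a, 0 < 1 - π a * (1 - p a) := by
    intro a
    have h1 : π a * (1 - p a) ≤ π a :=
      mul_le_of_le_one_right (le_of_lt (hπ0 a)) (by linarith [hp0 a])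
    linarith [hπ1 a]
  have hpq : ∀ a, 0 < p a * (1 - π a * (1 - p a)) := fun a => mul_pos (hp0 a) (hq a)
  have hπp00 : 0 < π 0 * p 0 := mul_pos (hπ0 0) (hp0 0)
  set ψ : Fin (n+1) → ℝ :=
    fun a => (1 - p a * (1 - π a * (1 - p a))) / (p a * (1 - π a * (1 - p a))) with hψdef
  have hψγ : ∀ a, (p a * (1 - π a * (1 - p a))) * ψ a = 1 - p a * (1 - π a * (1 - p a)) := by
    intro a
    have hne : p a * (1 - π a * (1 - p a)) ≠ 0 := ne_of_gt (hpq a)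
    rw [hψdef]
    field_simp
    exact mul_div_cancel_left₀ _ hne
  have hψp : ∀ a, π a * p a * ψ a * d a
      = π a * d a / (1 - π a * (1 - p a)) - π a * p a * d a := by
    intro a
    rw [hψdef]
    have h1 : p a ≠ 0 := ne_of_gt (hp0 a)
    have h2 : (1 - π a * (1 - p a)) ≠ 0 := ne_of_gt (hq a)
    field_simp
  set σ' : ℝ := ∑ l, π l * (1 - p l) with hσdef
  set A : ℝ := ∑ l, π l * p l with hAdef
  have hσnn : 0 ≤ σ' := Finset.sum_nonneg fun l _ =>
    mul_nonneg (le_of_lt (hπ0 l)) (by linarith [hp1 l])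
  have hA : A + σ' = 1 := by
    rw [hAdef, hσdef, ← Finset.sum_add_distrib]
    have h : ∀ l : Fin (n+1), π l * p l + π l * (1 - p l) = π l := fun l => by ring
    rw [Finset.sum_congr rfl fun l _ => h l]
    exact hπsum
  set E1 : ℝ := ∑ k ∈ univ.erase 0, π k * d k / (1 - π k * (1 - p k)) with hE1def
  set E2 : ℝ := ∑ k ∈ univ.erase 0, π k * p k * d k with hE2def
  set y : ℝ := 1 / (π 0 * p 0) * E1 + c with hydef
  have hy : π 0 * p 0 * y = E1 + π 0 * p 0 * c := by
    have hne : π 0 * p 0 ≠ 0 := ne_of_gt hπp00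
    rw [hydef]
    have h0 : π 0 ≠ 0 := ne_of_gt (hπ0 0)
    have h1 : p 0 ≠ 0 := ne_of_gt (hp0 0)
    field_simp
  set X : Fin (n+2) → ℝ := fun e => Fin.lastCases y (fun a => y + ψ a * d a) e with hXdef
  have hXc : ∀ a : Fin (n+1), X a.castSucc = y + ψ a * d a := by
    intro a; rw [hXdef]; simp
  have hXl : X (Fin.last (n+1)) = y := by rw [hXdef]; simp
  set xstar : Fin (n+1) → ℝ := fun j => X j.succ with hxsdef
  have hsplit : ∀ f : Fin (n+2) → ℝ, ∑ k : Fin (n+1), f k.succ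
      = (∑ a : Fin (n+1), f a.castSucc) + f (Fin.last (n+1)) - f ((0 : Fin (n+1)).castSucc) := by
    intro f
    have h1 := Fin.sum_univ_succ (n := n+1) f
    have h2 := Fin.sum_univ_castSucc (n := n+1) f
    rw [Fin.castSucc_zero]
    have : f 0 + ∑ k : Fin (n+1), f k.succ = (∑ a : Fin (n+1), f a.castSucc) + f (Fin.last (n+1)) := by
      rw [← h1, h2]
    linarith
  have hErase : ∀ g : Fin (n+1) → ℝ, ∑ a, g a = g 0 + ∑ a ∈ univ.erase 0, g a :=
    fun g => (Finset.add_sum_erase univ g (mem_univ 0)).symm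
  set Sx : ℝ := ∑ a, π a * p a * (y + ψ a * d a) with hSxdef
  set Sd : ℝ := ∑ k, π k * p k * dt k with hSddef
  have hSx : Sx = A * y + π 0 * p 0 * (ψ 0 * d 0) + (E1 - E2) := by
    rw [hSxdef]
    have h1 : ∀ a : Fin (n+1), π a * p a * (y + ψ a * d a)
        = π a * p a * y + π a * p a * ψ a * d a := fun a => by ring
    rw [Finset.sum_congr rfl fun a _ => h1 a, Finset.sum_add_distrib, ← Finset.sum_mul, ← hAdef,
      hErase (fun a => π a * p a * ψ a * d a)]
    have h2 : ∑ a ∈ univ.erase 0, π a * p a * ψ a * d a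
        = ∑ a ∈ univ.erase 0, (π a * d a / (1 - π a * (1 - p a)) - π a * p a * d a) :=
      Finset.sum_congr rfl fun a _ => hψp a
    rw [h2, Finset.sum_sub_distrib, ← hE1def, ← hE2def]
    ring
  have hSd : Sd = π 0 * p 0 * c + E2 := by
    rw [hSddef, hErase (fun k => π k * p k * dt k)]
    have h1 : ∑ k ∈ univ.erase 0, π k * p k * dt k = E2 := by
      rw [hE2def]
      refine Finset.sum_congr rfl fun k hk => ?_
      rw [hdt k, if_neg (Finset.ne_of_mem_erase hk)]
    rw [h1, hdt 0, if_pos rfl]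
  have hT : ∀ m : Fin (n+1), ∑ l ∈ univ.erase m, π l * (1 - p l) = σ' - π m * (1 - p m) := by
    intro m
    have h := Finset.add_sum_erase univ (fun l => π l * (1 - p l)) (mem_univ m)
    simp only [hσdef]
    linarith [h]
  -- main row identity, agent rows
  have hmain : ∀ m : Fin (n+1), m ≠ 0 →
      X m.castSucc - ∑ k : Fin (n+1), R m.castSucc k.succ * X k.succ
        = ∑ k : Fin (n+1), U m.castSucc k * dt k := by
    intro m hm
    have hs := hsplit (fun e => R m.castSucc e * X e)
    rw [hs, hR12 m, hXl, hR11 m 0, if_neg hm, hXc 0, hT m]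
    have h1 : ∑ a : Fin (n+1), R m.castSucc a.castSucc * X a.castSucc
        = ((1 - p m) * (π m * p m) + (1 - p m)) * (y + ψ m * d m) + p m * Sx := by
      have h1a : ∀ a : Fin (n+1), R m.castSucc a.castSucc * X a.castSucc
          = (if m = a then ((1 - p m) * (π m * p m) + (1 - p m)) * (y + ψ a * d a) else 0)
            + p m * (π a * p a * (y + ψ a * d a)) := by
        intro a
        rw [hR11 m a, hXc a]
        by_cases h : m = a
        · subst h; rw [if_pos rfl, if_pos rfl]; ring
        · rw [if_neg h, if_neg h]; ring
      rw [Finset.sum_congr rfl fun a _ => h1a a, Finset.sum_add_distrib,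
        Finset.sum_ite_eq univ m _, if_pos (mem_univ m), ← Finset.mul_sum, ← hSxdef]
    rw [h1]
    have h2 : ∑ k : Fin (n+1), U m.castSucc k * dt k
        = ((1 - p m) * (π m * p m) + (1 - p m)) * d m + p m * Sd := by
      have h2a : ∀ k : Fin (n+1), U m.castSucc k * dt k
          = (if m = k then ((1 - p m) * (π m * p m) + (1 - p m)) * dt k else 0)
            + p m * (π k * p k * dt k) := by
        intro k
        rw [hU1 m k]
        by_cases h : m = k
        · subst h; rw [if_pos rfl, if_pos rfl]; ring
        · rw [if_neg h, if_neg h]; ring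
      rw [Finset.sum_congr rfl fun k _ => h2a k, Finset.sum_add_distrib,
        Finset.sum_ite_eq univ m _, if_pos (mem_univ m), ← Finset.mul_sum, ← hSddef,
        hdt m, if_neg hm]
    rw [h2, hXc m, hSx, hSd]
    linear_combination (-(p m * y)) * hA + p m * hy + d m * hψγ m
  -- fusion row
  have hfusion : X (Fin.last (n+1)) - ∑ k : Fin (n+1), R (Fin.last (n+1)) k.succ * X k.succ
      = ∑ k : Fin (n+1), U (Fin.last (n+1)) k * dt k := by
    have hs := hsplit (fun e => R (Fin.last (n+1)) e * X e)
    rw [hs, hXl, hR22, hR21 0, hXc 0]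
    have h1 : ∑ a : Fin (n+1), R (Fin.last (n+1)) a.castSucc * X a.castSucc = Sx := by
      rw [hSxdef]
      exact Finset.sum_congr rfl fun a _ => by rw [hR21 a, hXc a]
    have h2 : ∑ k : Fin (n+1), U (Fin.last (n+1)) k * dt k = Sd := by
      rw [hSddef]
      exact Finset.sum_congr rfl fun k _ => by rw [hU2 k]
    rw [h1, h2, hSx, hSd]
    linear_combination (-y) * hA + hy
  have hcase : ∀ j : Fin (n+1),
      X j.succ - ∑ k : Fin (n+1), R j.succ k.succ * X k.succ
        = ∑ k : Fin (n+1), U j.succ k * dt k := by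
    intro j
    refine Fin.lastCases ?_ (fun a => ?_) j
    · rw [Fin.succ_last]; exact hfusion
    · rw [Fin.succ_castSucc]; exact hmain a.succ (Fin.succ_ne_zero a)
  have hRtapp : ∀ j k, Rt j k = R j.succ k.succ := by intro j k; rw [hRt]; rfl
  have hUtapp : ∀ j k, Ut j k = U j.succ k := by intro j k; rw [hUt]; rfl
  have hkeyM : (1 - Rt).mulVec xstar = Ut.mulVec dt := by
    funext j
    rw [Matrix.sub_mulVec, Matrix.one_mulVec, Pi.sub_apply]
    have hL : Rt.mulVec xstar j = ∑ k : Fin (n+1), R j.succ k.succ * X k.succ := by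
      simp [Matrix.mulVec, dotProduct, hRtapp, hxsdef]
    have hRr : Ut.mulVec dt j = ∑ k : Fin (n+1), U j.succ k * dt k := by
      simp [Matrix.mulVec, dotProduct, hUtapp]
    rw [hL, hRr, show xstar j = X j.succ from by rw [hxsdef]]
    exact hcase j
  -- row sums
  have habs1 : ∀ m : Fin (n+1), m ≠ 0 → ∑ k : Fin (n+1), |R m.castSucc k.succ| < 1 := by
    intro m hm
    have hs := hsplit (fun e => |R m.castSucc e|)
    rw [hs]
    have hDnn : 0 ≤ (1 - p m) * (π m * p m) + (1 - p m) := by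
      have h1 : (0:ℝ) ≤ 1 - p m := by linarith [hp1 m]
      exact add_nonneg (mul_nonneg h1 (mul_nonneg (le_of_lt (hπ0 m)) (le_of_lt (hp0 m)))) h1
    have h1 : ∑ a : Fin (n+1), |R m.castSucc a.castSucc|
        = ((1 - p m) * (π m * p m) + (1 - p m)) + p m * A := by
      have h1a : ∀ a : Fin (n+1), |R m.castSucc a.castSucc|
          = (if m = a then ((1 - p m) * (π m * p m) + (1 - p m)) else 0) + p m * (π a * p a) := by
        intro a
        rw [hR11 m a, abs_of_nonneg]
        have hnn2 : 0 ≤ p m * (π a * p a) :=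
          mul_nonneg (le_of_lt (hp0 m)) (mul_nonneg (le_of_lt (hπ0 a)) (le_of_lt (hp0 a)))
        by_cases h : m = a
        · rw [if_pos h]; linarith
        · rw [if_neg h]; linarith
      rw [Finset.sum_congr rfl fun a _ => h1a a, Finset.sum_add_distrib,
        Finset.sum_ite_eq univ m _, if_pos (mem_univ m), ← Finset.mul_sum, hAdef]
    have h2 : |R m.castSucc (Fin.last (n+1))| = p m * (σ' - π m * (1 - p m)) := by
      rw [hR12 m, hT m, abs_of_nonneg]
      refine mul_nonneg (le_of_lt (hp0 m)) ?_
      rw [← hT m]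
      exact Finset.sum_nonneg fun l _ =>
        mul_nonneg (le_of_lt (hπ0 l)) (by linarith [hp1 l])
    have h3 : |R m.castSucc ((0:Fin (n+1)).castSucc)| = p m * (π 0 * p 0) := by
      rw [hR11 m 0, if_neg hm, zero_add]
      exact abs_of_nonneg (le_of_lt (mul_pos (hp0 m) hπp00))
    rw [h1, h2, h3]
    have hppos : 0 < p m * (π 0 * p 0) := mul_pos (hp0 m) hπp00
    have heq : (1 - p m) * (π m * p m) + (1 - p m) + p m * A
        + p m * (σ' - π m * (1 - p m)) - p m * (π 0 * p 0) = 1 - p m * (π 0 * p 0) := by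
      linear_combination (p m) * hA
    linarith [heq]
  have habs2 : ∑ k : Fin (n+1), |R (Fin.last (n+1)) k.succ| < 1 := by
    have hs := hsplit (fun e => |R (Fin.last (n+1)) e|)
    rw [hs]
    have h1 : ∑ a : Fin (n+1), |R (Fin.last (n+1)) a.castSucc| = A := by
      rw [hAdef]
      refine Finset.sum_congr rfl fun a _ => ?_
      rw [hR21 a, abs_of_nonneg (mul_nonneg (le_of_lt (hπ0 a)) (le_of_lt (hp0 a)))]
    have h2 : |R (Fin.last (n+1)) (Fin.last (n+1))| = σ' := by
      rw [hR22]
      exact abs_of_nonneg hσnn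
    have h3 : |R (Fin.last (n+1)) ((0:Fin (n+1)).castSucc)| = π 0 * p 0 := by
      rw [hR21 0, abs_of_nonneg (le_of_lt hπp00)]
    rw [h1, h2, h3]
    linarith [hA, hπp00]
  have habs : ∀ j : Fin (n+1), ∑ k : Fin (n+1), |Rt j k| < 1 := by
    intro j
    have hj : ∑ k : Fin (n+1), |Rt j k| = ∑ k : Fin (n+1), |R j.succ k.succ| := by
      exact Finset.sum_congr rfl fun k _ => by rw [hRtapp]
    rw [hj]
    refine Fin.lastCases ?_ (fun a => ?_) j
    · rw [Fin.succ_last]; exact habs2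
    · rw [Fin.succ_castSucc]; exact habs1 a.succ (Fin.succ_ne_zero a)
  set Cb : ℝ := Finset.sup' univ ⟨0, mem_univ 0⟩ (fun j => ∑ k : Fin (n+1), |Rt j k|) with hCbdef
  have hCle : ∀ j, ∑ k : Fin (n+1), |Rt j k| ≤ Cb := fun j =>
    Finset.le_sup' (fun j => ∑ k : Fin (n+1), |Rt j k|) (mem_univ j)
  have hClt : Cb < 1 := by
    rw [hCbdef]
    exact (Finset.sup'_lt_iff _).mpr fun j _ => habs j
  have hC0 : 0 ≤ Cb :=
    le_trans (Finset.sum_nonneg fun k _ => abs_nonneg _) (hCle 0)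
  have hnorm : ∀ v, ‖Rt.mulVec v‖ ≤ Cb * ‖v‖ := aux_mulVec_norm_le Rt Cb hCle
  have hdet : (1 - Rt).det ≠ 0 := aux_det_ne Rt Cb hClt hnorm
  have hinv : (1 - Rt)⁻¹.mulVec (Ut.mulVec dt) = xstar := aux_fixed Rt hdet _ xstar hkeyM
  have hx : xstar = Rt.mulVec xstar + Ut.mulVec dt := by
    have h := hkeyM
    rw [Matrix.sub_mulVec, Matrix.one_mulVec, sub_eq_iff_eq_add] at h
    nth_rewrite 1 [h]
    exact add_comm _ _
  refine ⟨?_, ?_, ?_⟩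
  · rw [Matrix.isUnit_iff_isUnit_det]
    exact isUnit_iff_ne_zero.mpr hdet
  · intro Λ hΛ
    rw [hinv]
    exact aux_conv Rt Cb hC0 hClt hnorm _ xstar hx Λ hΛ
  · rw [hinv, show xstar (Fin.last n) = X (Fin.last n).succ from by rw [hxsdef],
      Fin.succ_last, hXl, hydef]
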